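/- Let G be a nice graph with m edges and maximum degree Δ, and let x be the minimum of Σ_{e∈E(G)} ℓ(e) over all proper labellings ℓ of G. Then x ≤ ML^W(G) + m and ML^W(G) + m ≤ 3(m + Δ·x). -/

import Mathlib

open SimpleGraph Finset

variable {V : Type*}

/-- `W.inc u` is the number of edge-traversals of the walk `W` incident to `u`. -/
def SimpleGraph.Walk.inc [DecidableEq V] {G : SimpleGraph V} {a b : V}
    (W : G.Walk a b) (u : V) : ℕ :=
  (W.edges.filter (fun e => u ∈ e)).length

/-- A walk `W` of `G` is irregularising if in the multigraph `G + W` no two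
adjacent vertices have the same degree. -/
def SimpleGraph.Walk.Irregularising [Fintype V] [DecidableEq V] {G : SimpleGraph V}
    [DecidableRel G.Adj] {a b : V} (W : G.Walk a b) : Prop :=
  ∀ ⦃u v : V⦄, G.Adj u v → G.degree u + W.inc u ≠ G.degree v + W.inc v

/-- The vertex sum `σ_ℓ(u)` of a labelling. -/
def vertexSum [Fintype V] [DecidableEq V] (G : SimpleGraph V) [DecidableRel G.Adj]
    (ℓ : Sym2 V → ℕ) (u : V) : ℕ :=
  ∑ w ∈ G.neighborFinset u, ℓ s(u, w)

/-- A labelling is proper if adjacent vertices get distinct sums. -/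
def IsProperLabelling [Fintype V] [DecidableEq V] (G : SimpleGraph V) [DecidableRel G.Adj]
    (ℓ : Sym2 V → ℕ) : Prop :=
  ∀ ⦃u v : V⦄, G.Adj u v → vertexSum G ℓ u ≠ vertexSum G ℓ v

/-- Minimum length of an irregularising walk, as an extended natural number. -/
noncomputable def MLW [Fintype V] [DecidableEq V] (G : SimpleGraph V) [DecidableRel G.Adj] : ℕ∞ :=
  ⨅ (a : V) (b : V) (W : G.Walk a b) (_ : W.Irregularising), (W.length : ℕ∞)

/-- Infimum over irregularising walks of the maximum number of traversals of a single edge. -/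
noncomputable def MEW [Fintype V] [DecidableEq V] (G : SimpleGraph V) [DecidableRel G.Adj] : ℕ∞ :=
  ⨅ (a : V) (b : V) (W : G.Walk a b) (_ : W.Irregularising),
    ((W.edges.toFinset.sup fun e => W.edges.count e : ℕ) : ℕ∞)

/-- Infimum over irregularising walks of `max_u inc_W(u)`. -/
noncomputable def MVW [Fintype V] [DecidableEq V] (G : SimpleGraph V) [DecidableRel G.Adj] : ℕ∞ :=
  ⨅ (a : V) (b : V) (W : G.Walk a b) (_ : W.Irregularising),
    ((Finset.univ.sup fun u => W.inc u : ℕ) : ℕ∞)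

/-- If `G` is a nice graph with `m` edges and maximum degree `Δ`, and `x`
is the minimum total label sum over proper labellings of `G`, then
`x ≤ ML^W(G) + m` and `ML^W(G) + m ≤ 3(m + Δ·x)`. -/
private lemma count_sum_aux [Fintype V] [DecidableEq V] (G : SimpleGraph V) [DecidableRel G.Adj]
    (l : List (Sym2 V)) (hl : ∀ e ∈ l, e ∈ G.edgeSet) :
    ∑ e ∈ G.edgeFinset, l.count e = l.length := by
  induction l with
  | nil => simp
  | cons e l ih =>
    have he : e ∈ G.edgeFinset := by
      rw [SimpleGraph.mem_edgeFinset]; exact hl e (List.mem_cons_self)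
    have ih' := ih (fun f hf => hl f (List.mem_cons_of_mem _ hf))
    have hcc : ∀ f ∈ G.edgeFinset, (e :: l).count f = l.count f + if e = f then 1 else 0 := by
      intro f _; rw [List.count_cons]; congr 1; simp
    rw [Finset.sum_congr rfl hcc, Finset.sum_add_distrib, ih', Finset.sum_ite_eq, if_pos he]
    simp

private lemma inc_eq_aux [Fintype V] [DecidableEq V] (G : SimpleGraph V) [DecidableRel G.Adj]
    (u : V) (l : List (Sym2 V)) (hl : ∀ e ∈ l, e ∈ G.edgeSet) :
    (l.filter (fun e => u ∈ e)).length = ∑ w ∈ G.neighborFinset u, l.count s(u, w) := by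
  induction l with
  | nil => simp
  | cons e l ih =>
    have he := hl e (List.mem_cons_self)
    have ih' := ih (fun f hf => hl f (List.mem_cons_of_mem _ hf))
    by_cases hu : u ∈ e
    · obtain ⟨w₀, rfl⟩ : ∃ w, s(u, w) = e := ⟨Sym2.Mem.other hu, Sym2.other_spec hu⟩
      have hw₀ : w₀ ∈ G.neighborFinset u := by
        rw [SimpleGraph.mem_neighborFinset]; exact (SimpleGraph.mem_edgeSet G).mp he
      have hf : ((s(u, w₀) :: l).filter (fun e => u ∈ e)).length
          = (l.filter (fun e => u ∈ e)).length + 1 := by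
        simp [List.filter_cons, hu]
      have hcc : ∀ w ∈ G.neighborFinset u,
          (s(u, w₀) :: l).count s(u, w) = l.count s(u, w) + if w₀ = w then 1 else 0 := by
        intro w _; rw [List.count_cons]; congr 1
        by_cases hww : w₀ = w
        · simp [hww]
        · have h2 : ¬(u = w ∧ w₀ = u) := by rintro ⟨h1, h2⟩; exact hww (h2.trans h1)
          simp [hww, h2]
      rw [hf, ih', Finset.sum_congr rfl hcc, Finset.sum_add_distrib,
        Finset.sum_ite_eq, if_pos hw₀]
    · have hcc : ∀ w ∈ G.neighborFinset u, (e :: l).count s(u, w) = l.count s(u, w) := by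
        intro w _
        have hne : e ≠ s(u, w) := by rintro rfl; exact hu (Sym2.mem_mk_left u w)
        simp [List.count_cons, hne]
      rw [Finset.sum_congr rfl hcc]
      simpa [List.filter_cons, hu] using ih'

lemma walk_inc_eq [Fintype V] [DecidableEq V] {G : SimpleGraph V} [DecidableRel G.Adj]
    {a b : V} (W : G.Walk a b) (u : V) :
    W.inc u = ∑ w ∈ G.neighborFinset u, W.edges.count s(u, w) :=
  inc_eq_aux G u W.edges (fun _ he => W.edges_subset_edgeSet he)

lemma walk_length_eq [Fintype V] [DecidableEq V] {G : SimpleGraph V} [DecidableRel G.Adj]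
    {a b : V} (W : G.Walk a b) :
    ∑ e ∈ G.edgeFinset, W.edges.count e = W.length := by
  rw [count_sum_aux G W.edges (fun _ he => W.edges_subset_edgeSet he), Walk.length_edges]
/-- A walk bouncing `j` times back and forth across an edge. -/
def bounce {G : SimpleGraph V} {u v : V} (h : G.Adj u v) : ℕ → G.Walk u u
  | 0 => Walk.nil
  | (j+1) => Walk.cons h (Walk.cons h.symm (bounce h j))

lemma bounce_edges {G : SimpleGraph V} {u v : V} (h : G.Adj u v) (j : ℕ) :
    (bounce h j).edges = List.replicate (2 * j) s(u, v) := by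
  induction j with
  | zero => simp [bounce]
  | succ j ih =>
    show s(u, v) :: s(v, u) :: (bounce h j).edges = _
    have hsw : s(v, u) = s(u, v) := Sym2.eq_swap
    have h2 : 2 * (j + 1) = (2 * j) + 1 + 1 := by omega
    rw [hsw, ih, h2, List.replicate_succ, List.replicate_succ]

private lemma reach_aux [DecidableEq V] {G : SimpleGraph V}
    {r : V} (W : G.Walk r r) (S : Finset (Sym2 V))
    (hWS : ∀ e ∈ S, e ∈ W.edges) :
    ∀ {c a : V} (_ : G.Walk c a), c ∈ W.support →
      a ∈ W.support ∨ ∃ u v, G.Adj u v ∧ u ∈ W.support ∧ s(u, v) ∉ S := by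
  intro c a P
  induction P with
  | nil => exact fun hc => Or.inl hc
  | @cons c' d a' h P ih =>
    intro hc
    by_cases hS' : s(c', d) ∈ S
    · exact ih (Walk.snd_mem_support_of_mem_edges W (hWS _ hS'))
    · exact Or.inr ⟨c', d, h, hc, hS'⟩

lemma exists_walk_counts [Fintype V] [DecidableEq V] (G : SimpleGraph V) [DecidableRel G.Adj]
    (hconn : G.Connected) (r : V) (M : Sym2 V → ℕ) (hM : ∀ e ∈ G.edgeSet, 1 ≤ M e) :
    ∃ W : G.Walk r r, ∀ e ∈ G.edgeFinset, W.edges.count e = 2 * M e := by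
  suffices h : ∀ (k : ℕ) (S : Finset (Sym2 V)), S ⊆ G.edgeFinset →
      (G.edgeFinset \ S).card ≤ k →
      (∃ W : G.Walk r r, (∀ e ∈ S, W.edges.count e = 2 * M e) ∧ ∀ e ∈ W.edges, e ∈ S) →
      ∃ W : G.Walk r r, ∀ e ∈ G.edgeFinset, W.edges.count e = 2 * M e by
    exact h (G.edgeFinset \ ∅).card ∅ (Finset.empty_subset _) le_rfl
      ⟨Walk.nil, by simp, by simp⟩
  intro k
  induction k with
  | zero =>
    rintro S hS hcard ⟨W, hW1, -⟩
    have hES : G.edgeFinset \ S = ∅ := Finset.card_eq_zero.mp (Nat.le_zero.mp hcard)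
    have : S = G.edgeFinset :=
      Finset.Subset.antisymm hS (Finset.sdiff_eq_empty_iff_subset.mp hES)
    exact ⟨W, this ▸ hW1⟩
  | succ k ih =>
    rintro S hS hcard ⟨W, hW1, hW2⟩
    by_cases hfull : G.edgeFinset ⊆ S
    · have : S = G.edgeFinset := Finset.Subset.antisymm hS hfull
      exact ⟨W, this ▸ hW1⟩
    · obtain ⟨f, hfE, hfS⟩ := Finset.not_subset.mp hfull
      revert hfE hfS
      refine Sym2.ind (fun a b hfE hfS => ?_) f
      have hab : G.Adj a b := by rwa [SimpleGraph.mem_edgeFinset, SimpleGraph.mem_edgeSet] at hfE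
      have hWS : ∀ e ∈ S, e ∈ W.edges := by
        intro e heS
        have hc := hW1 e heS
        have hM1 : 1 ≤ M e := hM e (by rw [← SimpleGraph.mem_edgeFinset]; exact hS heS)
        by_contra hmem
        have h0 : W.edges.count e = 0 := List.count_eq_zero.mpr hmem
        omega
      obtain ⟨P⟩ := hconn.preconnected r a
      have hres := reach_aux W S hWS P W.start_mem_support
      have hgot : ∃ u v, G.Adj u v ∧ u ∈ W.support ∧ s(u, v) ∉ S := by
        rcases hres with ha | h
        · exact ⟨a, b, hab, ha, hfS⟩
        · exact h
      obtain ⟨u, v, huv, huW, hnS⟩ := hgot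
      set B : G.Walk u u := bounce huv (M s(u, v)) with hB
      set W' : G.Walk r r :=
        (W.takeUntil u huW).append (B.append (W.dropUntil u huW)) with hW'
      have hWedges : W.edges = (W.takeUntil u huW).edges ++ (W.dropUntil u huW).edges := by
        conv_lhs => rw [← Walk.take_spec W huW]
        rw [Walk.edges_append]
      have hW'edges : W'.edges
          = (W.takeUntil u huW).edges ++ (B.edges ++ (W.dropUntil u huW).edges) := by
        rw [hW', Walk.edges_append, Walk.edges_append]
      have hBcount : ∀ e, B.edges.count e = if e = s(u, v) then 2 * M s(u, v) else 0 := by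
        intro e
        rw [hB, bounce_edges, List.count_replicate]
        simp only [beq_iff_eq]
        by_cases he : e = s(u, v)
        · rw [if_pos he.symm, if_pos he]
        · rw [if_neg (fun h => he h.symm), if_neg he]
      have hcount : ∀ e, W'.edges.count e = W.edges.count e + B.edges.count e := by
        intro e
        rw [hW'edges, hWedges, List.count_append, List.count_append, List.count_append]
        omega
      refine ih (insert s(u, v) S) ?_ ?_ ⟨W', ?_, ?_⟩
      · exact Finset.insert_subset (by rw [SimpleGraph.mem_edgeFinset]; exact huv) hS
      · rw [Finset.sdiff_insert]
        have hmem : s(u, v) ∈ G.edgeFinset \ S :=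
          Finset.mem_sdiff.mpr ⟨by rw [SimpleGraph.mem_edgeFinset]; exact huv, hnS⟩
        rw [Finset.card_erase_of_mem hmem]
        omega
      · intro e he
        rcases Finset.mem_insert.mp he with rfl | heS
        · have h0 : W.edges.count s(u, v) = 0 :=
            List.count_eq_zero.mpr (fun hmem => hnS (hW2 _ hmem))
          rw [hcount, hBcount, h0, if_pos rfl]
          exact Nat.zero_add _
        · have hne : e ≠ s(u, v) := fun h => hnS (h ▸ heS)
          rw [hcount, hBcount, hW1 e heS, if_neg hne]
          exact Nat.add_zero _
      · intro e he
        rw [hW'edges] at he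
        simp only [List.mem_append] at he
        rcases he with h1 | h2 | h3
        · exact Finset.mem_insert_of_mem
            (hW2 _ (by rw [hWedges]; exact List.mem_append.mpr (Or.inl h1)))
        · have : e = s(u, v) := List.eq_of_mem_replicate (by rwa [hB, bounce_edges] at h2)
          exact this ▸ Finset.mem_insert_self _ _
        · exact Finset.mem_insert_of_mem
            (hW2 _ (by rw [hWedges]; exact List.mem_append.mpr (Or.inr h3)))
theorem stmt_6 {V : Type*} [Fintype V] [DecidableEq V] (G : SimpleGraph V)
    [DecidableRel G.Adj] (hconn : G.Connected)
    (hK2 : ¬ Nonempty (G ≃g (⊤ : SimpleGraph (Fin 2))))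
    (x : ℕ)
    (hx : IsLeast {s : ℕ | ∃ ℓ : Sym2 V → ℕ, (∀ e ∈ G.edgeSet, 1 ≤ ℓ e) ∧
      IsProperLabelling G ℓ ∧ ∑ e ∈ G.edgeFinset, ℓ e = s} x) :
    (x : ℕ∞) ≤ MLW G + (G.edgeFinset.card : ℕ∞) ∧
      MLW G + (G.edgeFinset.card : ℕ∞) ≤
        3 * ((G.edgeFinset.card : ℕ∞) + (G.maxDegree : ℕ∞) * (x : ℕ∞)) := by
  obtain ⟨hxmem, hxlb⟩ := hx
  set m := G.edgeFinset.card with hm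
  constructor
  · rw [← tsub_le_iff_right, MLW]
    refine le_iInf fun a => le_iInf fun b => le_iInf fun W => le_iInf fun hW => ?_
    rw [tsub_le_iff_right]
    have key : x ≤ W.length + m := by
      apply hxlb
      refine ⟨fun e => 1 + W.edges.count e, fun e _ => Nat.le_add_right 1 _, ?_, ?_⟩
      · intro u v huv
        have hσ : ∀ w, vertexSum G (fun e => 1 + W.edges.count e) w
            = G.degree w + W.inc w := by
          intro w
          simp only [vertexSum]
          rw [Finset.sum_add_distrib, Finset.sum_const, smul_eq_mul, mul_one, walk_inc_eq]
          rfl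
        rw [hσ, hσ]
        exact hW huv
      · rw [Finset.sum_add_distrib, walk_length_eq, Finset.sum_const, smul_eq_mul, mul_one]
        omega
    calc (x : ℕ∞) ≤ ((W.length + m : ℕ) : ℕ∞) := Nat.cast_le.mpr key
      _ = (W.length : ℕ∞) + (m : ℕ∞) := by push_cast; rfl
  · obtain ⟨ℓ, hℓ1, hℓprop, hℓsum⟩ := hxmem
    haveI : Nonempty V := hconn.nonempty
    set Δ := G.maxDegree with hΔdef
    have hΔ1 : ∀ e ∈ G.edgeSet, 1 ≤ Δ * ℓ e := by
      intro e he
      have h1 : 1 ≤ Δ := by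
        revert he
        refine Sym2.ind (fun c d he => ?_) e
        have hcd : G.Adj c d := (SimpleGraph.mem_edgeSet G).mp he
        exact le_trans ((G.degree_pos_iff_exists_adj c).mpr ⟨d, hcd⟩)
          (G.degree_le_maxDegree c)
      have h2 := hℓ1 e he
      exact Nat.one_le_iff_ne_zero.mpr (Nat.mul_ne_zero (by omega) (by omega))
    obtain ⟨W, hWc⟩ := exists_walk_counts G hconn (Classical.arbitrary V)
      (fun e => Δ * ℓ e) hΔ1
    have hinc : ∀ u, W.inc u = 2 * (Δ * vertexSum G ℓ u) := by
      intro u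
      rw [walk_inc_eq]
      have hcc : ∀ w ∈ G.neighborFinset u,
          W.edges.count s(u, w) = 2 * (Δ * ℓ s(u, w)) := by
        intro w hw
        exact hWc _ (by
          rw [SimpleGraph.mem_edgeFinset, SimpleGraph.mem_edgeSet]
          exact (SimpleGraph.mem_neighborFinset G u w).mp hw)
      rw [Finset.sum_congr rfl hcc]
      simp only [vertexSum, Finset.mul_sum]
    have hirr : W.Irregularising := by
      intro u v huv
      have hσ : vertexSum G ℓ u ≠ vertexSum G ℓ v := hℓprop huv
      have hdu : G.degree u ≤ Δ := G.degree_le_maxDegree u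
      have hdv : G.degree v ≤ Δ := G.degree_le_maxDegree v
      have hdu1 : 0 < G.degree u := (G.degree_pos_iff_exists_adj u).mpr ⟨v, huv⟩
      have hdv1 : 0 < G.degree v := (G.degree_pos_iff_exists_adj v).mpr ⟨u, huv.symm⟩
      rw [hinc u, hinc v]
      rcases Nat.lt_or_ge (vertexSum G ℓ u) (vertexSum G ℓ v) with hlt | hge
      · have hkey : Δ * vertexSum G ℓ u + Δ ≤ Δ * vertexSum G ℓ v := by
          calc Δ * vertexSum G ℓ u + Δ = Δ * (vertexSum G ℓ u + 1) := by ring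
            _ ≤ Δ * vertexSum G ℓ v := Nat.mul_le_mul_left Δ hlt
        set A := Δ * vertexSum G ℓ u
        set B := Δ * vertexSum G ℓ v
        omega
      · have hlt : vertexSum G ℓ v < vertexSum G ℓ u :=
          lt_of_le_of_ne hge (fun h => hσ h.symm)
        have hkey : Δ * vertexSum G ℓ v + Δ ≤ Δ * vertexSum G ℓ u := by
          calc Δ * vertexSum G ℓ v + Δ = Δ * (vertexSum G ℓ v + 1) := by ring
            _ ≤ Δ * vertexSum G ℓ u := Nat.mul_le_mul_left Δ hlt
        set A := Δ * vertexSum G ℓ u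
        set B := Δ * vertexSum G ℓ v
        omega
    have hlen : W.length = 2 * (Δ * x) := by
      rw [← walk_length_eq W, Finset.sum_congr rfl hWc, ← hℓsum]
      simp only [Finset.mul_sum]
    have hMLW : MLW G ≤ ((2 * (Δ * x) : ℕ) : ℕ∞) := by
      rw [MLW]
      refine iInf_le_of_le (Classical.arbitrary V) (iInf_le_of_le (Classical.arbitrary V)
        (iInf_le_of_le W (le_trans (iInf_le _ hirr) ?_)))
      rw [hlen]
    calc MLW G + (m : ℕ∞) ≤ ((2 * (Δ * x) : ℕ) : ℕ∞) + (m : ℕ∞) :=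
          add_le_add hMLW le_rfl
      _ = ((2 * (Δ * x) + m : ℕ) : ℕ∞) := by push_cast; rfl
      _ ≤ ((3 * (m + Δ * x) : ℕ) : ℕ∞) := Nat.cast_le.mpr (by
          set y := Δ * x
          omega)
      _ = 3 * ((m : ℕ∞) + (Δ : ℕ∞) * (x : ℕ∞)) := by push_cast; ring
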